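/- For the SU(r,s) root data with r ≥ s ≥ 1, one has Σ_{α ∈ Δ⁺_c} α = Σ_{β ∈ Δ⁺_nc} β (i.e. ρ_c = ρ_nc) if and only if r = s + 1. -/

import Mathlib

section SuRhoHelpers
open Finset

lemma sum_pick (k m : ℕ) (f : ℕ → ℝ) :
    ∑ j ∈ Finset.range m, (if k = j then f j else 0) = if k < m then f k else 0 := by
  rw [Finset.sum_ite_eq]; simp

lemma sum_shift (k r m : ℕ) (f : ℕ → ℝ) :
    ∑ l ∈ Finset.range m, (if k = r + l then f l else 0)
      = if r ≤ k ∧ k < r + m then f (k - r) else 0 := by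
  induction m with
  | zero => rw [if_neg (by omega)]; simp
  | succ m ih =>
      rw [Finset.sum_range_succ, ih]
      split_ifs <;>
        first
          | omega
          | (rw [show k - r = m from by omega]; ring)
          | ring

lemma sum_count (k b : ℕ) : ∑ j ∈ Finset.range b, (if k < j then (1:ℝ) else 0) = ((b - (k+1) : ℕ) : ℝ) := by
  rw [Finset.sum_boole]
  have : Finset.filter (fun x => k < x) (Finset.range b) = Finset.Ico (k+1) b := by
    ext x; simp; omega
  rw [this, Nat.card_Ico]

lemma D1 (r k : ℕ) :
    ∑ j ∈ Finset.range r, ∑ i ∈ Finset.range j,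
      ((if k = i then (1:ℝ) else 0) - (if k = j then 1 else 0))
    = ((r - (k+1) : ℕ) : ℝ) - (if k < r then (k:ℝ) else 0) := by
  simp only [Finset.sum_sub_distrib]
  congr 1
  · have : ∀ j, ∑ i ∈ Finset.range j, (if k = i then (1:ℝ) else 0) = if k < j then 1 else 0 := by
      intro j; rw [Finset.sum_ite_eq]; simp
    simp only [this, sum_count]
  · rw [Finset.sum_congr rfl (fun j _ => show (∑ _i ∈ Finset.range j, (if k = j then (1:ℝ) else 0))
        = if k = j then (j:ℝ) else 0 from by split_ifs <;> simp), sum_pick]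

lemma D2 (r s k : ℕ) :
    ∑ m ∈ Finset.range s, ∑ l ∈ Finset.range m,
      ((if k = r + l then (1:ℝ) else 0) - (if k = r + m then 1 else 0))
    = (if r ≤ k then ((s - (k - r + 1) : ℕ) : ℝ) else 0)
      - (if r ≤ k ∧ k < r + s then ((k - r : ℕ) : ℝ) else 0) := by
  simp only [Finset.sum_sub_distrib]
  congr 1
  · simp only [fun m => sum_shift k r m (fun _ => (1:ℝ))]
    rw [Finset.sum_boole]
    rcases le_or_gt r k with h | h
    · rw [if_pos h]
      have : Finset.filter (fun m => r ≤ k ∧ k < r + m) (Finset.range s)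
          = Finset.Ico (k - r + 1) s := by ext x; simp; omega
      rw [this, Nat.card_Ico]
    · rw [if_neg (by omega)]
      have : Finset.filter (fun m => r ≤ k ∧ k < r + m) (Finset.range s) = ∅ := by
        ext x; simp; omega
      simp [this]
  · rw [Finset.sum_congr rfl (fun m _ => show (∑ _l ∈ Finset.range m, (if k = r + m then (1:ℝ) else 0))
        = if k = r + m then ((m:ℕ):ℝ) else 0 from by split_ifs <;> simp),
      sum_shift k r s (fun m => ((m:ℕ):ℝ))]

lemma D3 (r s k : ℕ) :
    ∑ m ∈ Finset.range s, ∑ l ∈ Finset.range (m + 1),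
      ((if k = l then (1:ℝ) else 0) - (if k = r + m then 1 else 0))
    = ((s - k : ℕ) : ℝ)
      - (if r ≤ k ∧ k < r + s then ((k - r + 1 : ℕ) : ℝ) else 0) := by
  simp only [Finset.sum_sub_distrib]
  congr 1
  · have h1 : ∀ m, ∑ l ∈ Finset.range (m+1), (if k = l then (1:ℝ) else 0)
        = if k < m + 1 then 1 else 0 := by
      intro m; rw [Finset.sum_ite_eq]; simp
    simp only [h1]
    rw [Finset.sum_boole]
    have : Finset.filter (fun m => k < m + 1) (Finset.range s) = Finset.Ico k s := by
      ext x; simp; omega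
    rw [this, Nat.card_Ico]
  · rw [Finset.sum_congr rfl (fun m _ => show (∑ _l ∈ Finset.range (m+1), (if k = r + m then (1:ℝ) else 0))
        = if k = r + m then ((m + 1 : ℕ):ℝ) else 0 from by split_ifs <;> simp),
      sum_shift k r s (fun m => ((m + 1 : ℕ):ℝ))]

lemma D4 (r s k : ℕ) :
    ∑ l ∈ Finset.range s, ∑ i ∈ Finset.Ico (l + 1) r,
      ((if k = r + l then (1:ℝ) else 0) - (if k = i then 1 else 0))
    = (if r ≤ k ∧ k < r + s then ((r - (k - r + 1) : ℕ) : ℝ) else 0)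
      - (if k < r then ((min k s : ℕ) : ℝ) else 0) := by
  simp only [Finset.sum_sub_distrib]
  congr 1
  · rw [Finset.sum_congr rfl (fun l _ => show (∑ _i ∈ Finset.Ico (l+1) r, (if k = r + l then (1:ℝ) else 0))
        = if k = r + l then ((r - (l + 1) : ℕ):ℝ) else 0 from by split_ifs <;> simp [Nat.card_Ico]),
      sum_shift k r s (fun l => ((r - (l + 1) : ℕ):ℝ))]
  · have h1 : ∀ l, ∑ i ∈ Finset.Ico (l+1) r, (if k = i then (1:ℝ) else 0)
        = if l + 1 ≤ k ∧ k < r then 1 else 0 := by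
      intro l; rw [Finset.sum_ite_eq]; simp [Finset.mem_Ico]
    simp only [h1]
    rw [Finset.sum_boole]
    rcases lt_or_ge k r with h | h
    · rw [if_pos h]
      have : Finset.filter (fun l => l + 1 ≤ k ∧ k < r) (Finset.range s)
          = Finset.range (min k s) := by ext x; simp; omega
      rw [this, Finset.card_range]
    · rw [if_neg (by omega)]
      have : Finset.filter (fun l => l + 1 ≤ k ∧ k < r) (Finset.range s) = ∅ := by
        ext x; simp; omega
      simp [this, h]

end SuRhoHelpers


/-- The `i`-th standard basis vector of `ℝⁿ` (`0`-indexed; zero if `i ≥ n`). -/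
def stdv (n i : ℕ) : Fin n → ℝ := fun k => if (k : ℕ) = i then 1 else 0

/-- **`ρ_c = ρ_nc` for `SU(r,s)` iff `r = s + 1`** (indices `0`-based):
the sum of the compact positive roots equals the sum of the noncompact positive roots
if and only if `r = s + 1`. -/
theorem su_rho_c_eq_rho_nc_iff (r s : ℕ) (hs : 1 ≤ s) (hrs : s ≤ r) :
    (((∑ j ∈ Finset.range r, ∑ i ∈ Finset.range j,
        (stdv (r + s) i - stdv (r + s) j)) +
      ∑ m ∈ Finset.range s, ∑ l ∈ Finset.range m,
        (stdv (r + s) (r + l) - stdv (r + s) (r + m)))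
    = ((∑ m ∈ Finset.range s, ∑ l ∈ Finset.range (m + 1),
        (stdv (r + s) l - stdv (r + s) (r + m))) +
      ∑ l ∈ Finset.range s, ∑ i ∈ Finset.Ico (l + 1) r,
        (stdv (r + s) (r + l) - stdv (r + s) i)))
    ↔ r = s + 1 := by
  constructor
  · intro h
    have h0 := congrFun h ⟨0, by omega⟩
    simp only [Finset.sum_apply, Pi.add_apply, Pi.sub_apply, stdv, Fin.val_mk] at h0
    rw [D1, D2, D3, D4] at h0
    have c1 : ¬ (r ≤ 0) := by omega
    have c2 : ¬ (r ≤ 0 ∧ 0 < r + s) := by omega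
    simp only [if_pos (show 0 < r by omega), if_neg c1, if_neg c2] at h0
    have h1 : ((r - 1 : ℕ) : ℝ) = ((s : ℕ) : ℝ) := by simpa using h0
    have h2 : r - 1 = s := by exact_mod_cast h1
    omega
  · intro h
    subst h
    funext k
    simp only [Finset.sum_apply, Pi.add_apply, Pi.sub_apply, stdv]
    rw [D1, D2, D3, D4]
    have hk := k.isLt
    rcases le_or_gt (↑k : ℕ) s with h1 | h1
    · split_ifs with h2 h3 h4 <;>
        first
          | omega
          | (rw [show s + 1 - ((↑k : ℕ) + 1) = s - ↑k from by omega,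
              show (↑k : ℕ) ⊓ s = ↑k from by omega]
             ring)
    · split_ifs with h2 h3 h4 <;>
        first
          | omega
          | (rw [show s + 1 - ((↑k : ℕ) + 1) = 0 from by omega,
              show s - (↑k : ℕ) = 0 from by omega,
              show s + 1 - ((↑k : ℕ) - (s + 1) + 1) = s - ((↑k : ℕ) - (s + 1) + 1) + 1 from by omega]
             push_cast
             ring)
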